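/- Let P_1, ..., P_n be very ample lattice polytopes such that P = P_1 ∪ ... ∪ P_n is a convex polytope. Then P is very ample and k_P ≤ max{k_{P_1}, ..., k_{P_n}}. -/

import Mathlib

open Finset Pointwise

noncomputable section

/-- Lattice points: `ZL N = ℤ^N`. -/
abbrev ZL (N : ℕ) := Fin N → ℤ

/-- Embedding of the lattice into `ℝ^N`. -/
def toR {N : ℕ} (x : ZL N) : Fin N → ℝ := fun i => (x i : ℝ)

/-- The lattice polytope spanned by a finite set `V` of lattice points. -/
def poly {N : ℕ} (V : Finset (ZL N)) : Set (Fin N → ℝ) :=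
  convexHull ℝ (toR '' (V : Set (ZL N)))

/-- The lattice points of the dilate `k • P`. -/
def latPts {N : ℕ} (V : Finset (ZL N)) (k : ℕ) : Set (ZL N) :=
  {x | toR x ∈ (k : ℝ) • poly V}

/-- `P` is `k`-normal: every lattice point of `kP` is a sum of `k` lattice points of `P`. -/
def kNormal {N : ℕ} (V : Finset (ZL N)) (k : ℕ) : Prop :=
  ∀ x ∈ latPts V k, ∃ f : Fin k → ZL N, (∀ i, f i ∈ latPts V 1) ∧ ∑ i, f i = x

/-- `P` is normal. -/
def NormalPoly {N : ℕ} (V : Finset (ZL N)) : Prop := ∀ k, 1 ≤ k → kNormal V k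

/-- The set of which `d_P` is the least element. -/
def dSet {N : ℕ} (V : Finset (ZL N)) : Set ℕ :=
  {n | 0 < n ∧ ∀ k ≥ n, latPts V (k + 1) = latPts V 1 + latPts V k}

/-- The set of which the `k`-normality threshold `k_P` is the least element. -/
def kSet {N : ℕ} (V : Finset (ZL N)) : Set ℕ :=
  {K | 0 < K ∧ ∀ k ≥ K, kNormal V k}

/-- The set of which `ν_P` is the least element. -/
def nuSet {N : ℕ} (V : Finset (ZL N)) : Set ℕ :=
  {n | 0 < n ∧ ∀ k ≥ n, latPts V (k + 1) = (V : Set (ZL N)) + latPts V k}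

/-- `v` is a vertex of `P`. -/
def IsVertex {N : ℕ} (V : Finset (ZL N)) (v : ZL N) : Prop :=
  v ∈ V ∧ toR v ∈ Set.extremePoints ℝ (poly V)

/-- `P` is very ample: for every vertex `v`, every lattice point of the cone
`ℝ_{≥0}(P - v)` is a finite sum of elements `w - v` with `w ∈ P ∩ M`. -/
def VeryAmple {N : ℕ} (V : Finset (ZL N)) : Prop :=
  ∀ v, IsVertex V v → ∀ u : ZL N,
    (∃ c : ℝ, 0 ≤ c ∧ ∃ p ∈ poly V, toR u = c • (p - toR v)) →
    ∃ (m : ℕ) (w : Fin m → ZL N), (∀ i, w i ∈ latPts V 1) ∧ u = ∑ i, (w i - v)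

/-- The set of numbers `m` such that `x - d_P v` is a sum of `m` elements of `(P ∩ M) - v`;
`σ(x, d_P v)` is its least element. -/
def sigmaSet {N : ℕ} (V : Finset (ZL N)) (dP : ℕ) (x v : ZL N) : Set ℕ :=
  {m | ∃ w : Fin m → ZL N, (∀ i, w i ∈ latPts V 1) ∧ x - dP • v = ∑ i, (w i - v)}

/-- The set of all values `σ(x, d_P v)`; `m_P` is its greatest element. -/
def mSet {N : ℕ} (V : Finset (ZL N)) (dP : ℕ) : Set ℕ :=
  {s | ∃ x ∈ latPts V dP, ∃ v, IsVertex V v ∧ IsLeast (sigmaSet V dP x v) s}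

end
/-- If `P_1, …, P_n` are very ample lattice polytopes whose union
`P = P_1 ∪ ⋯ ∪ P_n` is a convex (lattice) polytope, then `P` is very ample and
`k_P ≤ max {k_{P_1}, …, k_{P_n}}`. -/
theorem stmt16 {N n : ℕ} (hn : 0 < n)
    (Vs : Fin n → Finset (ZL N)) (W : Finset (ZL N)) (kv : Fin n → ℕ)
    (hva : ∀ i, VeryAmple (Vs i))
    (hkv : ∀ i, IsLeast (kSet (Vs i)) (kv i))
    (hunion : poly W = ⋃ i, poly (Vs i)) :
    VeryAmple W ∧
      ∃ kP, IsLeast (kSet W) kP ∧ kP ≤ Finset.univ.sup kv := by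

  classical
  set K := Finset.univ.sup kv with hKdef
  have hK1 : 1 ≤ K := le_trans (hkv ⟨0, hn⟩).1.1 (Finset.le_sup (Finset.mem_univ _))
  have hsub : ∀ i, poly (Vs i) ⊆ poly W := by
    intro i; rw [hunion]; exact Set.subset_iUnion (fun j => poly (Vs j)) i
  have hlat1 : ∀ i, latPts (Vs i) 1 ⊆ latPts W 1 := by
    intro i x hx
    simp only [latPts, Set.mem_setOf_eq, Nat.cast_one, one_smul] at hx ⊢
    exact hsub i hx
  have hnorm : ∀ k, K ≤ k → kNormal W k := by
    intro k hk x hx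
    simp only [latPts, Set.mem_setOf_eq, hunion, Set.smul_set_iUnion, Set.mem_iUnion] at hx
    obtain ⟨i, hi⟩ := hx
    obtain ⟨f, hf1, hf2⟩ := (hkv i).1.2 k (le_trans (Finset.le_sup (Finset.mem_univ i)) hk) x hi
    exact ⟨f, fun j => hlat1 i (hf1 j), hf2⟩
  constructor
  · -- very ample
    rintro v hv u ⟨c, hc, p, hp, hup⟩
    have hvW : toR v ∈ poly W := extremePoints_subset hv.2
    set k := K + ⌈c⌉₊ with hkdef
    have hk1 : 1 ≤ k := le_trans hK1 (Nat.le_add_right _ _)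
    have hkK : K ≤ k := Nat.le_add_right _ _
    have hck : c ≤ (k : ℝ) := le_trans (Nat.le_ceil c) (by exact_mod_cast Nat.le_add_left _ _)
    have hkpos : (0:ℝ) < (k : ℝ) := by exact_mod_cast hk1
    have hconv : Convex ℝ (poly W) := convex_convexHull ℝ _
    have h1 : (c / k) • p + (1 - c / k) • toR v ∈ poly W := by
      refine hconv hp hvW (by positivity) ?_ (by ring)
      have : c / k ≤ 1 := by
        rw [div_le_one hkpos]; exact hck
      linarith
    have hmem : toR (u + k • v) ∈ (k : ℝ) • poly W := by
      have h2 := Set.smul_mem_smul_set (a := (k:ℝ)) h1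
      have heq : toR (u + k • v) = (k : ℝ) • ((c / k) • p + (1 - c / k) • toR v) := by
        funext j
        have huj : (toR u) j = c * (p j - (toR v) j) := by
          have := congrFun hup j
          simpa using this
        simp only [toR, Pi.smul_apply, Pi.add_apply, smul_eq_mul] at huj ⊢
        push_cast
        have : ((u j : ℝ)) = c * ((p j : ℝ) - (v j : ℝ)) := huj
        rw [this]
        field_simp
        simp only [Pi.smul_apply, smul_eq_mul, nsmul_eq_mul, Int.cast_mul, Int.cast_natCast]
        ring
      rw [heq]; exact h2
    obtain ⟨f, hf1, hf2⟩ := hnorm k hkK (u + k • v) hmem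
    refine ⟨k, f, hf1, ?_⟩
    have hsum : ∑ i, (f i - v) = (∑ i, f i) - k • v := by
      rw [Finset.sum_sub_distrib, Finset.sum_const, Finset.card_univ, Fintype.card_fin]
    rw [hsum, hf2]
    abel
  · have hKmem : K ∈ kSet W := ⟨hK1, hnorm⟩
    have hne : (kSet W).Nonempty := ⟨K, hKmem⟩
    exact ⟨sInf (kSet W), ⟨Nat.sInf_mem hne, fun b hb => Nat.sInf_le hb⟩, Nat.sInf_le hKmem⟩
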